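/- Let X_*(T) be the cocharacter lattice with pairing against simple roots Δ, and for each α ∈ Δ choose λ_α ∈ X_*(T)_- with ⟨α, λ_α⟩ < 0 and ⟨β, λ_α⟩ = 0 for β ≠ α. Then for any standard Levi L (with simple roots Δ_L), the monoid algebra F_p[X_*(T)_{- /L}] of L-antidominant cocharacters equals the localization of F_p[X_*(T)_-] at the elements e^{λ_α}, α ∈ Δ∖Δ_L. In particular Spec F_p[X_*(T)_{- /L}] → Spec F_p[X_*(T)_-] is an open immersion. -/

import Mathlib

/-!
Statement 5: Let `X = X_*(T)` be the cocharacter lattice, with simple roots `Δ`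
(indexed by `ι`) acting as functionals `α i : X → ℤ`.  For each `i` choose
`λα i ∈ X_*(T)_-` with `⟨α i, λα i⟩ < 0` and `⟨α j, λα i⟩ = 0` for `j ≠ i`.
Let `ΔL ⊆ ι` be the simple roots of a standard Levi `L`.  Then the monoid algebra
`F_p[X_*(T)_{−∕L}]` of `L`-antidominant cocharacters is the localization of
`F_p[X_*(T)_-]` at (the multiplicative monoid generated by) the elements
`e^{λα i}`, `i ∈ Δ ∖ Δ_L`; in particular the induced map
`Spec F_p[X_*(T)_{−∕L}] → Spec F_p[X_*(T)_-]` is an open immersion.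
-/

open AlgebraicGeometry

/-- `{λ ∈ X : ⟨α i, λ⟩ ≤ 0 for all i ∈ S}`; for `S = univ` this is `X_*(T)_-`,
for `S = Δ_L` this is `X_*(T)_{−∕L}`. -/
def antidomSubmonoid {X : Type} [AddCommGroup X] {ι : Type} (α : ι → X →+ ℤ)
    (S : Set ι) : AddSubmonoid X where
  carrier := {x | ∀ i ∈ S, α i x ≤ 0}
  zero_mem' := by intro i _; simp
  add_mem' := by
    intro a b ha hb i hi
    simpa [map_add] using add_nonpos (ha i hi) (hb i hi)

theorem levi_monoidAlgebra_isLocalization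
    (p : ℕ) [Fact p.Prime]
    {X : Type} [AddCommGroup X] {ι : Type} [Fintype ι]
    (α : ι → X →+ ℤ)
    (ΔL : Set ι)
    (lam : ι → antidomSubmonoid α (Set.univ : Set ι))   -- the elements λα
    (hneg : ∀ i, α i (lam i : X) < 0)
    (horth : ∀ i j, j ≠ i → α j (lam i : X) = 0)
    (hle : antidomSubmonoid α (Set.univ : Set ι) ≤ antidomSubmonoid α ΔL) :
    letI φ : AddMonoidAlgebra (ZMod p) (antidomSubmonoid α (Set.univ : Set ι)) →+*
        AddMonoidAlgebra (ZMod p) (antidomSubmonoid α ΔL) :=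
      AddMonoidAlgebra.mapDomainRingHom (ZMod p) (AddSubmonoid.inclusion hle)
    letI : Algebra (AddMonoidAlgebra (ZMod p) (antidomSubmonoid α (Set.univ : Set ι)))
        (AddMonoidAlgebra (ZMod p) (antidomSubmonoid α ΔL)) := φ.toAlgebra
    IsLocalization
      (Submonoid.closure
        ((fun i => AddMonoidAlgebra.single (lam i) (1 : ZMod p)) '' ΔLᶜ))
      (AddMonoidAlgebra (ZMod p) (antidomSubmonoid α ΔL)) ∧
    IsOpenImmersion (Spec.map (CommRingCat.ofHom
      (AddMonoidAlgebra.mapDomainRingHom (ZMod p) (AddSubmonoid.inclusion hle)))) := by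
  classical
  letI φ : AddMonoidAlgebra (ZMod p) (antidomSubmonoid α (Set.univ : Set ι)) →+*
      AddMonoidAlgebra (ZMod p) (antidomSubmonoid α ΔL) :=
    AddMonoidAlgebra.mapDomainRingHom (ZMod p) (AddSubmonoid.inclusion hle)
  letI instA : Algebra (AddMonoidAlgebra (ZMod p) (antidomSubmonoid α (Set.univ : Set ι)))
      (AddMonoidAlgebra (ZMod p) (antidomSubmonoid α ΔL)) := φ.toAlgebra
  have halg : algebraMap (AddMonoidAlgebra (ZMod p) (antidomSubmonoid α (Set.univ : Set ι))) (AddMonoidAlgebra (ZMod p) (antidomSubmonoid α ΔL)) = φ := rfl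
  -- φ on singles
  have hφ : ∀ (m : (antidomSubmonoid α (Set.univ : Set ι))) (c : ZMod p),
      φ (AddMonoidAlgebra.single m c)
        = AddMonoidAlgebra.single (AddSubmonoid.inclusion hle m) c := by
    intro m c
    exact AddMonoidAlgebra.mapDomain_single
  have hinclcoe : ∀ m : (antidomSubmonoid α (Set.univ : Set ι)), ((AddSubmonoid.inclusion hle m : (antidomSubmonoid α ΔL)) : X) = (m : X) := fun _ => rfl
  -- units lemma
  have hunit : ∀ m : (antidomSubmonoid α (Set.univ : Set ι)), (∀ j ∈ ΔL, α j (m : X) = 0) →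
      IsUnit (φ (AddMonoidAlgebra.single m 1)) := by
    intro m hm
    have hmem : -(m : X) ∈ (antidomSubmonoid α ΔL) := by
      intro j hj
      simp [hm j hj]
    refine IsUnit.of_mul_eq_one (AddMonoidAlgebra.single ⟨-(m : X), hmem⟩ 1) ?_
    rw [hφ, AddMonoidAlgebra.single_mul_single]
    have h0 : (AddSubmonoid.inclusion hle m) + (⟨-(m : X), hmem⟩ : (antidomSubmonoid α ΔL)) = 0 :=
      Subtype.ext (by simp [hinclcoe])
    rw [h0, mul_one]
    exact AddMonoidAlgebra.one_def.symm
  -- the sum of the lam i over the complement of ΔL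
  set F : Finset ι := (Set.toFinite ΔLᶜ).toFinset with hF
  have hFmem : ∀ i, i ∈ F ↔ i ∉ ΔL := by
    intro i; simp [hF]
  set σM : (antidomSubmonoid α (Set.univ : Set ι)) := ∑ i ∈ F, lam i with hσM
  have hcoeσ : (σM : X) = ∑ i ∈ F, (lam i : X) := by
    simp [hσM]
  have hσ0 : ∀ j ∈ ΔL, α j (σM : X) = 0 := by
    intro j hj
    rw [hcoeσ, map_sum]
    refine Finset.sum_eq_zero fun i hi => horth i j ?_
    intro h; exact ((hFmem i).1 hi) (h ▸ hj)
  have hσi : ∀ i ∉ ΔL, α i (σM : X) = α i (lam i : X) := by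
    intro i hi
    rw [hcoeσ, map_sum]
    refine Finset.sum_eq_single i (fun j hj hji => horth j i hji.symm) ?_ -- check direction
    intro h; exact absurd ((hFmem i).2 hi) h
  set t : (AddMonoidAlgebra (ZMod p) (antidomSubmonoid α (Set.univ : Set ι))) := AddMonoidAlgebra.single σM (1 : ZMod p) with ht
  have htpow : ∀ n : ℕ, t ^ n = AddMonoidAlgebra.single (n • σM) (1 : ZMod p) := by
    intro n; rw [ht, AddMonoidAlgebra.single_pow, one_pow]
  have hσunit : ∀ n : ℕ, IsUnit (φ (t ^ n)) := by
    intro n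
    rw [htpow]
    refine hunit _ fun j hj => ?_
    have : ((n • σM : (antidomSubmonoid α (Set.univ : Set ι))) : X) = n • (σM : X) := rfl
    rw [this, map_nsmul, hσ0 j hj, smul_zero]
  -- injectivity
  have hinj : Function.Injective φ := by
    have : Function.Injective (AddSubmonoid.inclusion hle) := by
      intro a b hab
      exact Subtype.ext (congrArg Subtype.val hab : ((AddSubmonoid.inclusion hle a : X)) = _)
    intro a b hab
    exact AddMonoidAlgebra.mapDomain_injective this hab
  -- surjectivity with denominators powers of t
  have hsurj : ∀ z : (AddMonoidAlgebra (ZMod p) (antidomSubmonoid α ΔL)), ∃ (r : (AddMonoidAlgebra (ZMod p) (antidomSubmonoid α (Set.univ : Set ι)))) (n : ℕ), z * φ (t ^ n) = φ r := by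
    intro z
    induction z using AddMonoidAlgebra.induction with
    | zero => exact ⟨0, 0, by simp⟩
    | single_add a b f hfa hb ih =>
      obtain ⟨r₂, n₂, h₂⟩ := ih
      -- handle the single
      set n₁ : ℕ := Finset.univ.sup (fun i => (α i (a : X)).toNat) with hn₁
      have hmem : (a : X) + n₁ • (σM : X) ∈ (antidomSubmonoid α (Set.univ : Set ι)) := by
        intro i _
        rw [map_add, map_nsmul, nsmul_eq_mul]
        by_cases hi : i ∈ ΔL
        · have h1 : α i (a : X) ≤ 0 := a.2 i hi
          rw [hσ0 i hi, mul_zero, add_zero]; exact h1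
        · have h2 := hσi i hi
          have h3 : α i (lam i : X) ≤ -1 := by have := hneg i; omega
          have h4 : (α i (a : X)).toNat ≤ n₁ := by
            rw [hn₁]; exact Finset.le_sup (f := fun i => (α i (a : X)).toNat) (Finset.mem_univ i)
          have h5 : α i (a : X) ≤ (n₁ : ℤ) :=
            le_trans (Int.self_le_toNat _) (by exact_mod_cast h4)
          have h6 : (n₁ : ℤ) * α i (σM : X) ≤ (n₁ : ℤ) * (-1) := by
            rw [h2]; exact mul_le_mul_of_nonneg_left h3 (by positivity)
          nlinarith
      refine ⟨AddMonoidAlgebra.single (⟨(a : X) + n₁ • (σM : X), hmem⟩ :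
          (antidomSubmonoid α (Set.univ : Set ι))) b * t ^ n₂
        + r₂ * t ^ n₁, n₁ + n₂, ?_⟩
      have harg : (AddSubmonoid.inclusion hle (⟨(a : X) + n₁ • (σM : X), hmem⟩ :
            (antidomSubmonoid α (Set.univ : Set ι))) : (antidomSubmonoid α ΔL))
          = a + AddSubmonoid.inclusion hle (n₁ • σM) := Subtype.ext rfl
      have key : (AddMonoidAlgebra.single a b :
            (AddMonoidAlgebra (ZMod p) (antidomSubmonoid α ΔL))) * φ (t ^ n₁)
          = φ (AddMonoidAlgebra.single (⟨(a : X) + n₁ • (σM : X), hmem⟩ :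
              (antidomSubmonoid α (Set.univ : Set ι))) b) := by
        rw [htpow, hφ, hφ, AddMonoidAlgebra.single_mul_single, mul_one, harg]
      rw [pow_add, map_mul, map_add, map_mul, map_mul, ← key, ← h₂]
      ring
  -- IsLocalization at powers of t
  have hlocpow : IsLocalization (Submonoid.powers t) (AddMonoidAlgebra (ZMod p) (antidomSubmonoid α ΔL)) := by
    refine (isLocalization_iff _ _).2 ⟨?_, ?_, ?_⟩
    · rintro ⟨y, n, rfl⟩
      rw [halg]
      exact hσunit n
    · intro z
      obtain ⟨r, n, h⟩ := hsurj z
      exact ⟨(r, ⟨t ^ n, n, rfl⟩), by rw [halg]; exact h⟩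
    · intro x y h
      rw [halg] at h
      exact ⟨1, by rw [hinj h]⟩
  haveI : IsLocalization.Away t (AddMonoidAlgebra (ZMod p) (antidomSubmonoid α ΔL)) := hlocpow
  -- product formula
  have hprod : ∀ s : Finset ι, (∏ i ∈ s, AddMonoidAlgebra.single (lam i) (1 : ZMod p))
      = AddMonoidAlgebra.single (∑ i ∈ s, lam i) (1 : ZMod p) := by
    intro s
    induction s using Finset.induction_on with
    | empty => simp [AddMonoidAlgebra.one_def]
    | insert _ _ hx ih =>
      rw [Finset.prod_insert hx, Finset.sum_insert hx, ih,
        AddMonoidAlgebra.single_mul_single, one_mul]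
  set Sub := Submonoid.closure
      ((fun i => AddMonoidAlgebra.single (lam i) (1 : ZMod p)) '' ΔLᶜ) with hSub
  have htmem : t ∈ Sub := by
    rw [ht, hσM, ← hprod]
    exact Submonoid.prod_mem _ fun i hi =>
      Submonoid.subset_closure ⟨i, (hFmem i).1 hi, rfl⟩
  have hSubUnit : ∀ r ∈ Sub, IsUnit (algebraMap (AddMonoidAlgebra (ZMod p) (antidomSubmonoid α (Set.univ : Set ι))) (AddMonoidAlgebra (ZMod p) (antidomSubmonoid α ΔL)) r) := by
    intro r hr
    rw [halg]
    induction hr using Submonoid.closure_induction with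
    | mem x hx =>
      obtain ⟨i, hi, rfl⟩ := hx
      exact hunit (lam i) fun j hj => horth i j (fun h => hi (h ▸ hj))
    | one => simp
    | mul x y hx hy ihx ihy => rw [map_mul]; exact ihx.mul ihy
  have hloc : IsLocalization Sub (AddMonoidAlgebra (ZMod p) (antidomSubmonoid α ΔL)) :=
    IsLocalization.of_le (Submonoid.powers t) Sub
      (Submonoid.powers_le.2 htmem) hSubUnit
  refine ⟨hloc, ?_⟩
  have := AlgebraicGeometry.IsOpenImmersion.of_isLocalization (S := (AddMonoidAlgebra (ZMod p) (antidomSubmonoid α ΔL))) t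
  rwa [halg] at this
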